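/- Let s ≠ 0 be a real number and let T be a tree with maximum degree Δ(T). If Δ(T) ≥ 3, then ρ(M_T(s)) > 1 + √3·|s| + s²; if moreover Δ(T) ≥ 4, then ρ(M_T(s)) > (1 + |s|)². -/

import Mathlib

open Filter Topology

/-- The deformed Laplacian matrix `M_G(s) = I - s·A + s²·(D - I)` of a finite simple graph. -/
noncomputable def defLap {V : Type*} [Fintype V] [DecidableEq V] (G : SimpleGraph V) (s : ℝ) :
    Matrix V V ℝ :=
  letI := Classical.decRel G.Adj
  (1 : Matrix V V ℝ) - s • (G.adjMatrix ℝ) +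
    s ^ 2 • (Matrix.diagonal (fun v => (G.degree v : ℝ)) - 1)

/-- The largest (real) eigenvalue of a matrix. -/
noncomputable def lamMax {V : Type*} [Fintype V] (M : Matrix V V ℝ) : ℝ :=
  sSup {μ : ℝ | ∃ v : V → ℝ, v ≠ 0 ∧ M.mulVec v = μ • v}

/-- The spectral radius of a real matrix: the supremum of the absolute values of its
(real) eigenvalues. -/
noncomputable def specRad {V : Type*} [Fintype V] (M : Matrix V V ℝ) : ℝ :=
  sSup {x : ℝ | ∃ μ : ℝ, (∃ v : V → ℝ, v ≠ 0 ∧ M.mulVec v = μ • v) ∧ x = |μ|}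

/-- The maximum degree of a finite simple graph. -/
noncomputable def maxDeg {V : Type*} [Fintype V] (G : SimpleGraph V) : ℕ :=
  letI := Classical.decRel G.Adj
  G.maxDegree



section Aux
open Matrix SimpleGraph

lemma eigen_bddAbove {n : Type*} [Fintype n] (M : Matrix n n ℝ) :
    BddAbove {μ : ℝ | ∃ v : n → ℝ, v ≠ 0 ∧ M.mulVec v = μ • v} := by
  refine ⟨∑ i, ∑ j, |M i j|, ?_⟩
  rintro μ ⟨v, hv, hMv⟩
  obtain ⟨i, hi⟩ : ∃ i, v i ≠ 0 := by
    by_contra h; push_neg at h; exact hv (funext h)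
  obtain ⟨i0, -, hi0⟩ := Finset.exists_max_image Finset.univ (fun i => |v i|) ⟨i, Finset.mem_univ i⟩
  have hvi0 : 0 < |v i0| := lt_of_lt_of_le (abs_pos.mpr hi) (hi0 i (Finset.mem_univ i))
  have h1 : (∑ j, M i0 j * v j) = μ * v i0 := by
    simpa [Matrix.mulVec, dotProduct] using congrFun hMv i0
  have h2 : |μ| * |v i0| ≤ (∑ j, |M i0 j|) * |v i0| := by
    rw [← abs_mul, ← h1]
    calc |∑ j, M i0 j * v j| ≤ ∑ j, |M i0 j * v j| := Finset.abs_sum_le_sum_abs _ _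
      _ = ∑ j, |M i0 j| * |v j| := by simp [abs_mul]
      _ ≤ ∑ j, |M i0 j| * |v i0| :=
          Finset.sum_le_sum fun j _ => mul_le_mul_of_nonneg_left (hi0 j (Finset.mem_univ j)) (abs_nonneg _)
      _ = (∑ j, |M i0 j|) * |v i0| := (Finset.sum_mul _ _ _).symm
  have h3 : |μ| ≤ ∑ j, |M i0 j| := le_of_mul_le_mul_right h2 hvi0
  calc μ ≤ |μ| := le_abs_self μ
    _ ≤ ∑ j, |M i0 j| := h3
    _ ≤ ∑ i, ∑ j, |M i j| :=
        Finset.single_le_sum (f := fun i => ∑ j, |M i j|)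
          (fun i _ => Finset.sum_nonneg fun j _ => abs_nonneg _) (Finset.mem_univ i0)

lemma rayleigh_le {n : Type*} [Fintype n] [DecidableEq n] {M : Matrix n n ℝ}
    (hM : M.IsHermitian) (x : n → ℝ) (hx : x ≠ 0) :
    x ⬝ᵥ M.mulVec x ≤ lamMax M * (x ⬝ᵥ x) := by
  have hne : Nonempty n := by
    by_contra h
    exact hx (funext fun i => absurd ⟨i⟩ h)
  obtain ⟨i0, -, hmax⟩ := Finset.exists_max_image Finset.univ hM.eigenvalues Finset.univ_nonempty
  set μ := hM.eigenvalues i0 with hμ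
  have hmem : μ ∈ {μ : ℝ | ∃ v : n → ℝ, v ≠ 0 ∧ M.mulVec v = μ • v} := by
    refine ⟨⇑(hM.eigenvectorBasis i0), ?_, hM.mulVec_eigenvectorBasis i0⟩
    have := hM.eigenvectorBasis.orthonormal.ne_zero i0
    intro hz
    apply this
    ext j
    exact congrFun hz j
  have hμle : μ ≤ lamMax M := le_csSup (eigen_bddAbove M) hmem
  -- spectral decomposition
  set U : Matrix n n ℝ := (hM.eigenvectorUnitary : Matrix n n ℝ) with hU
  set y : n → ℝ := (star U).mulVec x with hy
  have hxU : x ᵥ* U = y := by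
    ext i
    simp [hy, Matrix.vecMul, Matrix.mulVec, dotProduct, Matrix.star_apply, mul_comm]
  have hdiag : (RCLike.ofReal ∘ hM.eigenvalues : n → ℝ) = hM.eigenvalues := by
    ext i; simp
  have hQ : x ⬝ᵥ M.mulVec x = ∑ i, hM.eigenvalues i * (y i)^2 := by
    conv_lhs => rw [hM.spectral_theorem, Unitary.conjStarAlgAut_apply]
    rw [← Matrix.mulVec_mulVec, ← Matrix.mulVec_mulVec, Matrix.dotProduct_mulVec, hxU, hdiag]
    simp [dotProduct, Matrix.mulVec_diagonal]
    exact Finset.sum_congr rfl fun i _ => by ring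
  have hN : x ⬝ᵥ x = ∑ i, (y i)^2 := by
    have hUU : U * star U = 1 := (Matrix.mem_unitaryGroup_iff).mp hM.eigenvectorUnitary.2
    have : x ⬝ᵥ x = x ⬝ᵥ (U * star U).mulVec x := by rw [hUU, Matrix.one_mulVec]
    rw [this, ← Matrix.mulVec_mulVec, Matrix.dotProduct_mulVec, hxU]
    simp [dotProduct, pow_two, hy]
  rw [hQ, hN, Finset.mul_sum]
  exact Finset.sum_le_sum fun i _ =>
    mul_le_mul_of_nonneg_right ((hmax i (Finset.mem_univ i)).trans hμle) (sq_nonneg _)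

lemma no_triangle {V : Type*} {T : SimpleGraph V} (hT : T.IsAcyclic) {a b c : V}
    (hab : T.Adj a b) (hac : T.Adj a c) (hbc : T.Adj b c) : False := by
  rw [isAcyclic_iff_path_unique] at hT
  have hp : (SimpleGraph.Walk.cons hab.symm (SimpleGraph.Walk.cons hac SimpleGraph.Walk.nil) :
      T.Walk b c).IsPath := by
    simp [Walk.isPath_def, hab.ne', hbc.ne, hac.ne]
  have := hT (SimpleGraph.Path.singleton hbc) ⟨_, hp⟩
  have hlen := congrArg (fun p : T.Path b c => p.1.length) this
  simp [SimpleGraph.Path.singleton] at hlen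

lemma sum_split {V : Type*} [Fintype V] [DecidableEq V] (v₀ : V) (N : Finset V)
    (hv : v₀ ∉ N) (f : V → ℝ) (hf : ∀ u, u ≠ v₀ → u ∉ N → f u = 0) :
    ∑ u, f u = f v₀ + ∑ u ∈ N, f u := by
  rw [← Finset.sum_insert hv]
  refine (Finset.sum_subset (Finset.subset_univ _) ?_).symm
  intro u _ hu
  simp only [Finset.mem_insert, not_or] at hu
  exact hf u hu.1 hu.2

lemma quad_bound {V : Type*} [Fintype V] [DecidableEq V] (T : SimpleGraph V)
    (hT : T.IsAcyclic) (s : ℝ) (v₀ : V) (t : ℝ) (ht : 0 < t) :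
    letI := Classical.decRel T.Adj
    ∃ K : ℝ, (T.degree v₀ : ℝ) ≤ K ∧
      t^2 + (T.degree v₀ : ℝ) + 2 * |s| * t * (T.degree v₀ : ℝ)
        + s^2*((T.degree v₀ : ℝ)*t^2 + K - t^2 - (T.degree v₀ : ℝ))
        ≤ lamMax (defLap T s) * (t^2 + (T.degree v₀ : ℝ)) := by
  letI := Classical.decRel T.Adj
  set d : ℝ := (T.degree v₀ : ℝ) with hd
  set N : Finset V := T.neighborFinset v₀ with hN
  have hv₀N : v₀ ∉ N := T.notMem_neighborFinset_self v₀
  have hcard : (N.card : ℝ) = d := by rw [hd, SimpleGraph.degree]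
  set ε : ℝ := if 0 < s then -1 else 1 with hε
  have hε2 : ε ^ 2 = 1 := by
    rcases le_or_gt s 0 with h | h <;> simp [hε, h.not_gt, h] <;> norm_num
  have hεs : ε * s = -|s| := by
    rcases lt_trichotomy s 0 with h | h | h
    · simp [hε, h.not_gt, abs_of_neg h]
    · simp [h, hε]
    · simp [hε, h, abs_of_pos h]
  set x : V → ℝ := fun u => if u = v₀ then ε * t else if u ∈ N then 1 else 0 with hx
  have hxv₀ : x v₀ = ε * t := by simp [hx]
  have hxN : ∀ u ∈ N, x u = 1 := by
    intro u hu
    have : u ≠ v₀ := fun h => hv₀N (h ▸ hu)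
    simp [hx, this, hu]
  have hx0 : ∀ u, u ≠ v₀ → u ∉ N → x u = 0 := by intro u h1 h2; simp [hx, h1, h2]
  have hεne : ε ≠ 0 := by
    rcases le_or_gt s 0 with h | h <;> simp [hε, h.not_gt, h] <;> norm_num
  have hxne : x ≠ 0 := by
    intro h
    have := congrFun h v₀
    rw [hxv₀] at this
    exact (mul_ne_zero hεne ht.ne') this
  have hHerm : (defLap T s).IsHermitian := by
    rw [defLap, Matrix.IsHermitian, Matrix.conjTranspose_eq_transpose_of_trivial]
    have hA : (T.adjMatrix ℝ)ᵀ = T.adjMatrix ℝ := T.isSymm_adjMatrix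
    simp [Matrix.transpose_add, Matrix.transpose_sub, Matrix.transpose_smul, hA,
      Matrix.transpose_one, Matrix.diagonal_transpose]
  have key := rayleigh_le hHerm x hxne
  have hxx : x ⬝ᵥ x = t^2 + d := by
    rw [dotProduct, sum_split v₀ N hv₀N _ (fun u h1 h2 => by simp [hx0 u h1 h2])]
    have h5 : ∑ u ∈ N, x u * x u = ∑ u ∈ N, (1:ℝ) :=
      Finset.sum_congr rfl fun u hu => by rw [hxN u hu]; norm_num
    rw [hxv₀, h5, Finset.sum_const, nsmul_eq_mul, hcard]
    nlinarith [hε2]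
  have hA : x ⬝ᵥ (T.adjMatrix ℝ).mulVec x = 2 * ε * t * d := by
    rw [dotProduct, sum_split v₀ N hv₀N _ ?_]
    · have h1 : ((T.adjMatrix ℝ).mulVec x) v₀ = d := by
        rw [adjMatrix_mulVec_apply, ← hN, Finset.sum_congr rfl hxN,
          Finset.sum_const, nsmul_eq_mul, hcard, mul_one]
      have h2 : ∀ u ∈ N, ((T.adjMatrix ℝ).mulVec x) u = ε * t := by
        intro u hu
        rw [adjMatrix_mulVec_apply]
        have huv : T.Adj v₀ u := (T.mem_neighborFinset v₀ u).mp hu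
        have hv₀mem : v₀ ∈ T.neighborFinset u := (T.mem_neighborFinset u v₀).mpr huv.symm
        rw [Finset.sum_eq_single_of_mem v₀ hv₀mem ?_, hxv₀]
        intro w hw hwv
        have hadj : T.Adj u w := (T.mem_neighborFinset u w).mp hw
        have hwN : w ∉ N := by
          intro hwN
          exact no_triangle hT huv ((T.mem_neighborFinset v₀ w).mp hwN) hadj
        exact hx0 w hwv hwN
      have h7 : ∑ u ∈ N, x u * ((T.adjMatrix ℝ).mulVec x) u = ∑ u ∈ N, ε * t :=
        Finset.sum_congr rfl fun u hu => by rw [hxN u hu, h2 u hu, one_mul]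
      rw [h1, hxv₀, h7, Finset.sum_const, nsmul_eq_mul, hcard]
      ring
    · intro u h1 h2
      simp [hx0 u h1 h2]
  have hD : ∃ K : ℝ, d ≤ K ∧
      x ⬝ᵥ (Matrix.diagonal (fun v => (T.degree v : ℝ))).mulVec x = d * t^2 + K := by
    refine ⟨∑ u ∈ N, (T.degree u : ℝ), ?_, ?_⟩
    · rw [← hcard]
      calc (N.card : ℝ) = ∑ u ∈ N, (1:ℝ) := by simp
        _ ≤ ∑ u ∈ N, (T.degree u : ℝ) := by
            refine Finset.sum_le_sum fun u hu => ?_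
            have : 0 < T.degree u := by
              rw [T.degree_pos_iff_exists_adj]
              exact ⟨v₀, ((T.mem_neighborFinset v₀ u).mp hu).symm⟩
            exact_mod_cast this
    · rw [dotProduct, sum_split v₀ N hv₀N _ ?_]
      · have h6 : ∑ u ∈ N, x u * ((Matrix.diagonal (fun v => (T.degree v : ℝ))).mulVec x) u
            = ∑ u ∈ N, (T.degree u : ℝ) :=
          Finset.sum_congr rfl fun u hu => by
            rw [Matrix.mulVec_diagonal, hxN u hu]; ring
        rw [Matrix.mulVec_diagonal, hxv₀, h6]
        have h9 : ε * t * ((T.degree v₀ : ℝ) * (ε * t)) = d * t^2 := by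
          rw [← hd]; linear_combination (t^2 * d) * hε2
        rw [h9]
      · intro u h1 h2
        simp [hx0 u h1 h2]
  obtain ⟨K, hdK, hDval⟩ := hD
  refine ⟨K, hdK, ?_⟩
  have hQ : x ⬝ᵥ (defLap T s).mulVec x
      = (t^2 + d) - s * (2*ε*t*d) + s^2 * ((d*t^2 + K) - (t^2 + d)) := by
    rw [defLap]
    simp only [Matrix.add_mulVec, Matrix.sub_mulVec, Matrix.smul_mulVec,
      Matrix.one_mulVec, dotProduct_add, dotProduct_sub,
      dotProduct_smul, smul_eq_mul]
    rw [hxx, hA, hDval]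
  rw [hQ, hxx] at key
  have habs : -(s * (2*ε*t*d)) = 2 * |s| * t * d := by
    have h8 : s * (2*ε*t*d) = (ε*s) * (2*t*d) := by ring
    rw [h8, hεs]; ring
  linarith [key]

/-- for `s ≠ 0` and a tree `T`: if `Δ(T) ≥ 3` then
`ρ(M_T(s)) > 1 + √3·|s| + s²`; if moreover `Δ(T) ≥ 4` then `ρ(M_T(s)) > (1 + |s|)²`. -/
theorem stmt10 {V : Type*} [Fintype V] [DecidableEq V] (T : SimpleGraph V)
    (hT : T.IsTree) (s : ℝ) (hs : s ≠ 0) :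
    (3 ≤ maxDeg T → 1 + Real.sqrt 3 * |s| + s ^ 2 < lamMax (defLap T s)) ∧
    (4 ≤ maxDeg T → (1 + |s|) ^ 2 < lamMax (defLap T s)) := by
  letI := Classical.decRel T.Adj
  have hne : Nonempty V := hT.isConnected.nonempty
  obtain ⟨v₀, hv₀⟩ := T.exists_maximal_degree_vertex
  have hmd : maxDeg T = T.degree v₀ := hv₀
  have hb : 0 < |s| := abs_pos.mpr hs
  have hs2 : s ^ 2 = |s| ^ 2 := (sq_abs s).symm
  constructor
  · intro h3
    rw [hmd] at h3
    have hd3 : (3:ℝ) ≤ (T.degree v₀ : ℝ) := by exact_mod_cast h3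
    set t : ℝ := Real.sqrt 3 + |s| with htdef
    have hr : Real.sqrt 3 ^ 2 = 3 := Real.sq_sqrt (by norm_num)
    have hr0 : 0 < Real.sqrt 3 := Real.sqrt_pos.mpr (by norm_num)
    have ht : 0 < t := by positivity
    obtain ⟨K, hK, hQ⟩ := quad_bound T hT.2 s v₀ t ht
    set d : ℝ := (T.degree v₀ : ℝ)
    have hpos : 0 < t^2 + d := by positivity
    rw [← sub_pos]
    have step : (1 + Real.sqrt 3 * |s| + s ^ 2) * (t^2 + d) < lamMax (defLap T s) * (t^2 + d) := by
      refine lt_of_lt_of_le ?_ hQ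
      rw [hs2]
      have expand : (t^2 + d + 2 * |s| * t*d + |s|^2*(d*t^2+K-t^2-d)) - (1 + Real.sqrt 3 * |s| + |s|^2)*(t^2+d)
          = |s|^2*(K-d) + Real.sqrt 3 * |s| * (d-3) + 4 * |s|^2*(d-3)
            + Real.sqrt 3 * |s|^3*(2*d-5) + |s|^4*(d-2) := by
        rw [htdef]
        linear_combination (|s|^2*d - 4 * |s|^2 - Real.sqrt 3 * |s|) * hr
      have f1 : 0 ≤ |s|^2*(K-d) := mul_nonneg (sq_nonneg _) (by linarith)
      have f2 : 0 ≤ Real.sqrt 3 * |s| * (d-3) :=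
        mul_nonneg (mul_nonneg hr0.le hb.le) (by linarith)
      have f3 : 0 ≤ |s|^2*(d-3) := mul_nonneg (sq_nonneg _) (by linarith)
      have f4 : 0 < Real.sqrt 3 * |s|^3*(2*d-5) := mul_pos (by positivity) (by linarith)
      have f5 : 0 ≤ |s|^4*(d-2) := mul_nonneg (by positivity) (by linarith)
      linarith [expand, f1, f2, f3, f4, f5]
    have := (mul_lt_mul_iff_left₀ hpos).mp step
    linarith
  · intro h4
    rw [hmd] at h4
    have hd4 : (4:ℝ) ≤ (T.degree v₀ : ℝ) := by exact_mod_cast h4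
    obtain ⟨K, hK, hQ⟩ := quad_bound T hT.2 s v₀ 2 (by norm_num)
    set d : ℝ := (T.degree v₀ : ℝ)
    have hpos : 0 < (2:ℝ)^2 + d := by positivity
    have step : ((1 + |s|) ^ 2) * ((2:ℝ)^2 + d) < lamMax (defLap T s) * ((2:ℝ)^2 + d) := by
      refine lt_of_lt_of_le ?_ hQ
      rw [hs2]
      have expand : ((2:ℝ)^2 + d + 2 * |s| * 2*d + |s|^2*(d*2^2+K-2^2-d)) - (1+|s|)^2*(2^2+d)
          = 2 * |s| * (d-4) + 2 * |s|^2*(d-4) + |s|^2*K := by ring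
      have f1 : 0 ≤ 2 * |s| * (d-4) := mul_nonneg (by positivity) (by linarith)
      have f2 : 0 ≤ 2 * |s|^2*(d-4) := mul_nonneg (by positivity) (by linarith)
      have hK4 : (4:ℝ) ≤ K := le_trans hd4 hK
      have f3 : |s|^2*4 ≤ |s|^2*K := mul_le_mul_of_nonneg_left hK4 (sq_nonneg _)
      have f4 : 0 < |s|^2 := by positivity
      linarith [expand, f1, f2, f3, f4]
    exact (mul_lt_mul_iff_left₀ hpos).mp step

end Aux
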